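/- Let ⊢ be a logic with theorems induced by a class K of matrices (i.e., Γ ⊢ φ iff every homomorphism into a member of K mapping Γ into the filter maps φ into the filter). Then every algebra A such that ⟨A, F⟩ is a model of ⊢ with Suszko congruence the identity satisfies all equations valid in the class of algebra reducts of K; in particular these algebras belong to the variety generated by the algebra reducts of K. -/
import Mathlib


/-- An algebraic language: a family of operation symbols indexed by arity.
(Following the paper, there are no nullary symbols; constants are treated as
unary constant operations where needed.) -/
structure Lang : Type 1 where
  ops : ℕ → Type

/-- An algebra for a language `L`. -/
structure Alg (L : Lang) : Type 1 where
  carrier : Type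
  interp : ∀ {n : ℕ}, L.ops n → (Fin n → carrier) → carrier

/-- Terms of the language `L` over a type `V` of variables. -/
inductive Term (L : Lang) (V : Type) : Type
  | var : V → Term L V
  | op : ∀ {n : ℕ}, L.ops n → (Fin n → Term L V) → Term L V

/-- Evaluation of a term in an algebra under an assignment of the variables. -/
def Term.eval {L : Lang} {V : Type} (A : Alg L) (v : V → A.carrier) :
    Term L V → A.carrier
  | .var x => v x
  | .op f ts => A.interp f (fun i => Term.eval A v (ts i))

/-- `θ` is a congruence of the algebra `A`. -/
def IsCongruence {L : Lang} (A : Alg L) (θ : A.carrier → A.carrier → Prop) : Prop :=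
  Equivalence θ ∧
    ∀ (n : ℕ) (f : L.ops n) (x y : Fin n → A.carrier),
      (∀ i, θ (x i) (y i)) → θ (A.interp f x) (A.interp f y)

/-- A relation `θ` is compatible with a subset `F`: related elements are either
both in or both out of `F` (stated one-sidedly; symmetry gives the rest). -/
def Compatible {L : Lang} (A : Alg L) (F : Set A.carrier)
    (θ : A.carrier → A.carrier → Prop) : Prop :=
  ∀ a b : A.carrier, θ a b → a ∈ F → b ∈ F

/-- `θ` is the Leibniz congruence of `F` on `A`: the largest congruence of `A`
compatible with `F`. -/
def IsLeibniz {L : Lang} (A : Alg L) (F : Set A.carrier)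
    (θ : A.carrier → A.carrier → Prop) : Prop :=
  IsCongruence A θ ∧ Compatible A F θ ∧
    ∀ θ', IsCongruence A θ' → Compatible A F θ' → ∀ a b, θ' a b → θ a b

/-- `F` is a deductive filter of the consequence relation `C` (on formulas
`Term L V`) on the algebra `A`. -/
def DedFilter {L : Lang} {V : Type} (C : Set (Term L V) → Term L V → Prop)
    (A : Alg L) (F : Set A.carrier) : Prop :=
  ∀ (Γ : Set (Term L V)) (φ : Term L V), C Γ φ →
    ∀ v : V → A.carrier,
      (∀ γ ∈ Γ, Term.eval A v γ ∈ F) → Term.eval A v φ ∈ F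

/-- `x` and `y` are related by the Leibniz congruence of `G` on `A`: some
congruence compatible with `G` relates them. -/
def LeibnizRel {L : Lang} (A : Alg L) (G : Set A.carrier)
    (x y : A.carrier) : Prop :=
  ∃ θ, IsCongruence A θ ∧ Compatible A G θ ∧ θ x y

/-- The Suszko congruence of `F` relative to `C` — the intersection of the
Leibniz congruences of all deductive filters of `C` extending `F` — is the
identity relation. -/
def SuszkoId {L : Lang} {V : Type} (C : Set (Term L V) → Term L V → Prop)
    (A : Alg L) (F : Set A.carrier) : Prop :=
  ∀ x y : A.carrier,
    (∀ G : Set A.carrier, DedFilter C A G → F ⊆ G → LeibnizRel A G x y) →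
    x = y

/-- The consequence relation induced by the (indexed) class of matrices
`⟨B k, G k⟩` on the formulas `Term L V`. -/
def MatCons {L : Lang} {V : Type} {ι : Type} (B : ι → Alg L)
    (G : ∀ k, Set (B k).carrier) (Γ : Set (Term L V)) (φ : Term L V) : Prop :=
  ∀ (k : ι) (v : V → (B k).carrier),
    (∀ γ ∈ Γ, Term.eval (B k) v γ ∈ G k) → Term.eval (B k) v φ ∈ G k

section Helpers
variable {L : Lang} {V : Type}

/-- Substitution of terms for variables. -/
def TSubst {W : Type} (σ : V → Term L W) : Term L V → Term L W
  | .var x => σ x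
  | .op f ts => .op f fun i => TSubst σ (ts i)

theorem eval_TSubst {W : Type} (A : Alg L) (σ : V → Term L W) (v : W → A.carrier) :
    ∀ t : Term L V,
      Term.eval A v (TSubst σ t) = Term.eval A (fun x => Term.eval A v (σ x)) t
  | .var _ => rfl
  | .op f ts => by
      simp only [TSubst, Term.eval]
      exact congrArg _ (funext fun i => eval_TSubst A σ v (ts i))

/-- The variable `x` occurs in the term. -/
def TOcc (x : V) : Term L V → Prop
  | .var y => x = y
  | .op _ ts => ∃ i, TOcc x (ts i)

theorem eval_congr_occ (A : Alg L) (v v' : V → A.carrier) :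
    ∀ t : Term L V, (∀ x, TOcc x t → v x = v' x) →
      Term.eval A v t = Term.eval A v' t
  | .var x, h => h x rfl
  | .op f ts, h => by
      simp only [Term.eval]
      exact congrArg _ (funext fun i =>
        eval_congr_occ A v v' (ts i) (fun x hx => h x ⟨i, hx⟩))

theorem TOcc_finite : ∀ t : Term L V, {x | TOcc x t}.Finite
  | .var y => Set.Finite.subset (Set.finite_singleton y) (fun x hx => hx)
  | .op f ts => by
      have h : {x | TOcc x (.op f ts)} = ⋃ i, {x | TOcc x (ts i)} := by
        ext x; simp [TOcc]
      rw [h]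
      exact Set.finite_iUnion fun i => TOcc_finite (ts i)

theorem exists_fresh {V : Type} [Infinite V] (m : ℕ) (S : Set V) (hS : S.Finite) :
    ∃ e : Fin m → V, Function.Injective e ∧ ∀ j, e j ∉ S := by
  have h1 : Sᶜ.Infinite := hS.infinite_compl
  haveI : Infinite ↥Sᶜ := h1.to_subtype
  let f : Fin m ↪ ↥Sᶜ := (Fin.valEmbedding).trans (Infinite.natEmbedding ↥Sᶜ)
  exact ⟨fun j => (f j).1, fun a b h => f.injective (Subtype.ext h), fun j => (f j).2⟩

theorem exists_fresh' {V : Type} [Infinite V] (α : Type) [Finite α]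
    (S : Set V) (hS : S.Finite) :
    ∃ e : α → V, Function.Injective e ∧ ∀ j, e j ∉ S := by
  haveI := Fintype.ofFinite α
  obtain ⟨e, einj, efr⟩ := exists_fresh (Fintype.card α) S hS
  exact ⟨fun a => e ((Fintype.equivFin α) a),
    fun a b h => (Fintype.equivFin α).injective (einj h),
    fun a => efr _⟩

end Helpers

/-- One-position congruence step for the polynomial relation. -/
theorem theta_op_step {L : Lang} {V : Type} [Infinite V] [DecidableEq V]
    (A : Alg L) (G' : Set A.carrier) (a b : A.carrier)
    (hab : ∀ (p : Term L V) (u : V) (v : V → A.carrier),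
      (Term.eval A (Function.update v u a) p ∈ G' ↔
       Term.eval A (Function.update v u b) p ∈ G'))
    {n : ℕ} (f : L.ops n) (c : Fin n → A.carrier) (i : Fin n) :
    ∀ (p : Term L V) (u : V) (v : V → A.carrier),
      (Term.eval A (Function.update v u (A.interp f (Function.update c i a))) p ∈ G' ↔
       Term.eval A (Function.update v u (A.interp f (Function.update c i b))) p ∈ G') := by
  classical
  intro p u v
  obtain ⟨e, einj, efr⟩ := exists_fresh (V := V) (n+1)
    ({x | TOcc x p} ∪ {u}) ((TOcc_finite p).union (Set.finite_singleton u))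
  set u' : V := e 0 with hu'
  set wv : Fin n → V := fun j => e j.succ with hwv
  have hwvu' : ∀ j, wv j ≠ u' := by
    intro j h
    exact (Fin.succ_ne_zero j) (einj h)
  have hwvinj : Function.Injective wv := fun j j' h =>
    Fin.succ_injective _ (einj h)
  set σ : V → Term L V := fun x =>
    if x = u then Term.op f (fun j => if j = i then Term.var u' else Term.var (wv j))
    else Term.var x with hσ
  set v₁ : V → A.carrier := fun x =>
    if h : ∃ j, wv j = x then c h.choose else v x with hv₁
  have hv₁w : ∀ j, v₁ (wv j) = c j := by
    intro j
    have h : ∃ j', wv j' = wv j := ⟨j, rfl⟩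
    have hc : h.choose = j := hwvinj h.choose_spec
    simp only [hv₁, dif_pos h, hc]
  have key : ∀ d : A.carrier,
      Term.eval A (Function.update v₁ u' d) (TSubst σ p) =
      Term.eval A (Function.update v u (A.interp f (Function.update c i d))) p := by
    intro d
    rw [eval_TSubst]
    apply eval_congr_occ
    intro x hx
    by_cases hxu : x = u
    · subst hxu
      simp only [hσ, if_pos rfl, Term.eval, Function.update_self]
      congr 1
      funext j
      by_cases hji : j = i
      · subst hji; simp [Term.eval]
      · simp only [if_neg hji, Term.eval]
        rw [Function.update_of_ne (hwvu' j), hv₁w j, Function.update_of_ne hji]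
    · have hxu' : x ≠ u' := by
        intro h; subst h
        exact efr 0 (Or.inl hx)
      have hxw : ¬ ∃ j, wv j = x := by
        rintro ⟨j, rfl⟩
        exact efr j.succ (Or.inl hx)
      simp only [hσ, if_neg hxu, Term.eval]
      rw [Function.update_of_ne hxu', Function.update_of_ne hxu]
      exact dif_neg hxw
  rw [← key a, ← key b]
  exact hab (TSubst σ p) u' v₁

/-- let `⊢` be a logic with theorems induced by a class of
matrices `⟨B k, G k⟩`.  If `⟨A, F⟩` is a model of `⊢` whose Suszko congruence
is the identity, then `A` satisfies every equation valid in the algebraic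
reducts of the matrices of the class; in particular, `A` belongs to the
variety generated by these algebraic reducts. -/
theorem suszko_reduced_models_satisfy_equations
    {L : Lang} {V : Type} [Infinite V] {ι : Type}
    (B : ι → Alg L) (G : ∀ k, Set (B k).carrier)
    (hthm : ∃ φ : Term L V, MatCons B G (∅ : Set (Term L V)) φ)
    (A : Alg L) (F : Set A.carrier)
    (hmod : DedFilter (MatCons B G (V := V)) A F)
    (hsz : SuszkoId (MatCons B G (V := V)) A F) :
    ∀ (W : Type) (t s : Term L W),
      (∀ (k : ι) (w : W → (B k).carrier),
        Term.eval (B k) w t = Term.eval (B k) w s) →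
      ∀ w : W → A.carrier, Term.eval A w t = Term.eval A w s := by
  classical
  intro W t s heq w
  obtain ⟨u0⟩ : Nonempty V := inferInstance
  apply hsz
  intro G' hG' _
  refine ⟨fun a b => ∀ (p : Term L V) (u : V) (v : V → A.carrier),
      (Term.eval A (Function.update v u a) p ∈ G' ↔
       Term.eval A (Function.update v u b) p ∈ G'), ⟨⟨?_, ?_, ?_⟩, ?_⟩, ?_, ?_⟩
  · -- reflexivity
    intro a p u v; exact Iff.rfl
  · -- symmetry
    intro a b h p u v; exact (h p u v).symm
  · -- transitivity
    intro a b c h1 h2 p u v; exact (h1 p u v).trans (h2 p u v)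
  · -- operation compatibility
    intro n f x y hxy
    set z : ℕ → Fin n → A.carrier := fun j i => if (i : ℕ) < j then y i else x i with hz
    have hz0 : z 0 = x := funext fun i => if_neg (Nat.not_lt_zero _)
    have hzn : z n = y := funext fun i => if_pos i.isLt
    have hstep : ∀ (j : ℕ) (hj : j < n),
        ∀ (p : Term L V) (u : V) (v : V → A.carrier),
          (Term.eval A (Function.update v u (A.interp f (z j))) p ∈ G' ↔
           Term.eval A (Function.update v u (A.interp f (z (j+1)))) p ∈ G') := by
      intro j hj
      have h1 : Function.update (z j) ⟨j, hj⟩ (x ⟨j, hj⟩) = z j := by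
        funext i
        by_cases hij : i = (⟨j, hj⟩ : Fin n)
        · subst hij
          simp [hz]
        · rw [Function.update_of_ne hij]
      have h2 : Function.update (z j) ⟨j, hj⟩ (y ⟨j, hj⟩) = z (j+1) := by
        funext i
        by_cases hij : i = (⟨j, hj⟩ : Fin n)
        · subst hij
          simp [hz]
        · rw [Function.update_of_ne hij]
          have hne : (i : ℕ) ≠ j := fun h => hij (Fin.ext h)
          simp only [hz]
          by_cases hlt : (i : ℕ) < j
          · rw [if_pos hlt, if_pos (Nat.lt_succ_of_lt hlt)]
          · rw [if_neg hlt, if_neg (fun h' => hlt (lt_of_le_of_ne (Nat.lt_succ_iff.mp h') hne))]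
      have := theta_op_step A G' (x ⟨j, hj⟩) (y ⟨j, hj⟩) (hxy ⟨j, hj⟩) f (z j) ⟨j, hj⟩
      rw [h1, h2] at this
      exact this
    have chain : ∀ j : ℕ, j ≤ n →
        ∀ (p : Term L V) (u : V) (v : V → A.carrier),
          (Term.eval A (Function.update v u (A.interp f x)) p ∈ G' ↔
           Term.eval A (Function.update v u (A.interp f (z j))) p ∈ G') := by
      intro j
      induction j with
      | zero => intro _ p u v; rw [hz0]
      | succ j ih =>
          intro hj p u v
          exact (ih (Nat.le_of_succ_le hj) p u v).trans (hstep j hj p u v)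
    intro p u v
    have := chain n le_rfl p u v
    rwa [hzn] at this
  · -- compatibility with G'
    intro a b hab haG
    have h := hab (Term.var u0) u0 (fun _ => a)
    simp only [Term.eval, Function.update_self] at h
    exact h.mp haG
  · -- the relation holds between the evaluations of t and s
    intro p u v
    set T : Set W := {ω | TOcc ω t} ∪ {ω | TOcc ω s} with hT
    have hTfin : T.Finite := (TOcc_finite t).union (TOcc_finite s)
    haveI : Finite ↥T := hTfin.to_subtype
    obtain ⟨e, einj, efr⟩ := exists_fresh' (V := V) ↥T
      ({x | TOcc x p} ∪ {u}) ((TOcc_finite p).union (Set.finite_singleton u))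
    set r : W → V := fun ω => if h : ω ∈ T then e ⟨ω, h⟩ else u0 with hr
    set t' : Term L V := TSubst (fun ω => Term.var (r ω)) t with ht'
    set s' : Term L V := TSubst (fun ω => Term.var (r ω)) s with hs'
    set σt : V → Term L V := fun x => if x = u then t' else Term.var x with hσt
    set σs : V → Term L V := fun x => if x = u then s' else Term.var x with hσs
    set pt : Term L V := TSubst σt p with hpt'
    set ps : Term L V := TSubst σs p with hps'
    have hvaleq : ∀ (k : ι) (vk : V → (B k).carrier),
        Term.eval (B k) vk pt = Term.eval (B k) vk ps := by
      intro k vk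
      rw [hpt', hps', eval_TSubst, eval_TSubst]
      apply eval_congr_occ
      intro x _
      by_cases hxu : x = u
      · subst hxu
        simp only [hσt, hσs, if_pos rfl, ht', hs', eval_TSubst]
        simp only [Term.eval]
        exact heq k (fun ω => vk (r ω))
      · simp only [hσt, hσs, if_neg hxu]
    have hcons1 : MatCons B G {pt} ps := by
      intro k vk hΓ
      rw [← hvaleq k vk]
      exact hΓ pt (Set.mem_singleton pt)
    have hcons2 : MatCons B G {ps} pt := by
      intro k vk hΓ
      rw [hvaleq k vk]
      exact hΓ ps (Set.mem_singleton ps)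
    set v₂ : V → A.carrier := fun x =>
      if h : ∃ τ : ↥T, e τ = x then w (h.choose : ↥T).1 else v x with hv₂
    have hv₂e : ∀ τ : ↥T, v₂ (e τ) = w τ.1 := by
      intro τ
      have h : ∃ τ' : ↥T, e τ' = e τ := ⟨τ, rfl⟩
      have hc : h.choose = τ := einj h.choose_spec
      simp only [hv₂, dif_pos h, hc]
    have keyval : ∀ (q : Term L W) (d : A.carrier),
        Term.eval A v₂ (TSubst (fun ω => Term.var (r ω)) q) ∈ G' →
        True := fun _ _ _ => trivial
    have hq : ∀ q : Term L W, (∀ ω, TOcc ω q → ω ∈ T) →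
        Term.eval A v₂ (TSubst (fun ω => Term.var (r ω)) q) = Term.eval A w q := by
      intro q hqT
      rw [eval_TSubst]
      apply eval_congr_occ
      intro ω hω
      have hωT : ω ∈ T := hqT ω hω
      simp only [Term.eval, hr, dif_pos hωT]
      exact hv₂e ⟨ω, hωT⟩
    have hkey : ∀ (σ : V → Term L V) (q : Term L W),
        σ = (fun x => if x = u then TSubst (fun ω => Term.var (r ω)) q else Term.var x) →
        (∀ ω, TOcc ω q → ω ∈ T) →
        Term.eval A v₂ (TSubst σ p) =
        Term.eval A (Function.update v u (Term.eval A w q)) p := by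
      intro σ q hσdef hqT
      rw [eval_TSubst]
      apply eval_congr_occ
      intro x hx
      by_cases hxu : x = u
      · subst hxu
        rw [hσdef]
        simp only [if_pos rfl, Function.update_self]
        exact hq q hqT
      · rw [hσdef]
        simp only [if_neg hxu, Term.eval]
        rw [Function.update_of_ne hxu]
        have hxe : ¬ ∃ τ : ↥T, e τ = x := by
          rintro ⟨τ, rfl⟩
          exact efr τ (Or.inl hx)
        simp only [hv₂]
        exact dif_neg hxe
    have hkt : Term.eval A v₂ pt = Term.eval A (Function.update v u (Term.eval A w t)) p :=
      hkey σt t hσt (fun ω hω => Or.inl hω)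
    have hks : Term.eval A v₂ ps = Term.eval A (Function.update v u (Term.eval A w s)) p :=
      hkey σs s hσs (fun ω hω => Or.inr hω)
    constructor
    · intro hmem
      rw [← hks]
      apply hG' {pt} ps hcons1 v₂
      intro γ hγ
      rw [Set.mem_singleton_iff] at hγ
      subst hγ
      rw [hkt]
      exact hmem
    · intro hmem
      rw [← hkt]
      apply hG' {ps} pt hcons2 v₂
      intro γ hγ
      rw [Set.mem_singleton_iff] at hγ
      subst hγ
      rw [hks]
      exact hmem
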